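/- (Bauer–Fike.) Let A be a diagonalizable complex d×d matrix with eigendecomposition A = V Λ V⁻¹, where Λ is diagonal with entries λ₁, …, λ_d. Let E be any complex d×d matrix with ‖E‖₂ ≤ δ, and let λ̃ be any eigenvalue of A + E. Then min_{1 ≤ k ≤ d} |λ̃ − λ_k| ≤ κ(V) · δ, where κ(V) = ‖V‖₂‖V⁻¹‖₂. -/

import Mathlib

set_option maxHeartbeats 1000000


open Matrix

open scoped Matrix.Norms.L2Operator

/-- The operator norm of a complex matrix, induced by the Euclidean (`ℓ²`) norm. -/
noncomputable def l2OpNorm {d : ℕ} (A : Matrix (Fin d) (Fin d) ℂ) : ℝ :=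
  ‖LinearMap.toContinuousLinearMap (Matrix.toEuclideanLin A)‖

lemma l2OpNorm_eq_norm {d : ℕ} (A : Matrix (Fin d) (Fin d) ℂ) : l2OpNorm A = ‖A‖ := rfl

lemma euclid_mulVec_le {d : ℕ} (A : Matrix (Fin d) (Fin d) ℂ)
    (v : Fin d → ℂ) :
    ‖(WithLp.equiv 2 (Fin d → ℂ)).symm (A *ᵥ v)‖ ≤
      l2OpNorm A * ‖(WithLp.equiv 2 (Fin d → ℂ)).symm v‖ := by
  rw [WithLp.equiv_symm_apply, ← Matrix.toEuclideanLin_apply_piLp_toLp]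
  exact (LinearMap.toContinuousLinearMap (Matrix.toEuclideanLin A)).le_opNorm _

/-- **Bauer–Fike.** Let `A = V Λ V⁻¹` be a diagonalizable complex
`d × d` matrix with `Λ = diagonal λ`. If `‖E‖₂ ≤ δ` and `λ̃` is an eigenvalue of
`A + E` (i.e. `(A + E)x = λ̃x` for some `x ≠ 0`), then
`min_k |λ̃ − λ_k| ≤ κ(V)·δ` where `κ(V) = ‖V‖₂·‖V⁻¹‖₂`. -/
theorem bauer_fike
    {d : ℕ} (A V E : Matrix (Fin d) (Fin d) ℂ) (lam : Fin d → ℂ)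
    (hV : IsUnit V.det)
    (hA : A = V * Matrix.diagonal lam * V⁻¹)
    (δ : ℝ) (hE : l2OpNorm E ≤ δ)
    (lamPert : ℂ) (x : Fin d → ℂ) (hx : x ≠ 0)
    (heig : (A + E).mulVec x = lamPert • x) :
    ∃ k, ‖lamPert - lam k‖ ≤ (l2OpNorm V * l2OpNorm V⁻¹) * δ := by
  classical
  rcases Nat.eq_zero_or_pos d with rfl | hd
  · exact absurd (Subsingleton.elim x 0) hx
  obtain ⟨k, -, hk⟩ := Finset.exists_min_image Finset.univ
    (fun k => ‖lamPert - lam k‖) ⟨⟨0, hd⟩, Finset.mem_univ _⟩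
  refine ⟨k, ?_⟩
  set c := ‖lamPert - lam k‖ with hc
  clear_value c
  -- the transformed eigenvector
  obtain ⟨y, hy⟩ : ∃ y : Fin d → ℂ, y = V⁻¹ *ᵥ x := ⟨_, rfl⟩
  have hVy : V *ᵥ y = x := by
    rw [hy, mulVec_mulVec, mul_nonsing_inv _ hV, one_mulVec]
  have hy0 : y ≠ 0 := by
    intro h
    apply hx
    rw [← hVy, h, mulVec_zero]
  -- A x = lamPert • x - E x
  have hAx : A *ᵥ x = lamPert • x - E *ᵥ x := by
    have := heig
    rw [add_mulVec] at this
    linear_combination (norm := module) this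
  -- key identity : (lamPert • y - Λ y) = V⁻¹ (E x)
  have hw : lamPert • y - (Matrix.diagonal lam) *ᵥ y = V⁻¹ *ᵥ (E *ᵥ x) := by
    have hdiag : (Matrix.diagonal lam) *ᵥ y = (V⁻¹ * A) *ᵥ x := by
      rw [hA, hy, mulVec_mulVec]
      congr 1
      rw [← Matrix.mul_assoc, ← Matrix.mul_assoc, nonsing_inv_mul _ hV, Matrix.one_mul]
    rw [hdiag, ← mulVec_mulVec, hAx, mulVec_sub, mulVec_smul, hy]
    abel
  -- pass to Euclidean space
  obtain ⟨Y, hY⟩ : ∃ Y : EuclideanSpace ℂ (Fin d),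
      Y = (WithLp.equiv 2 (Fin d → ℂ)).symm y := ⟨_, rfl⟩
  obtain ⟨X, hX⟩ : ∃ X : EuclideanSpace ℂ (Fin d),
      X = (WithLp.equiv 2 (Fin d → ℂ)).symm x := ⟨_, rfl⟩
  obtain ⟨W, hW⟩ : ∃ W : EuclideanSpace ℂ (Fin d),
      W = (WithLp.equiv 2 (Fin d → ℂ)).symm (V⁻¹ *ᵥ (E *ᵥ x)) := ⟨_, rfl⟩
  have hYpos : 0 < ‖Y‖ := by
    rw [norm_pos_iff]
    intro h
    exact hy0 (by simpa [hY] using congrArg (WithLp.equiv 2 (Fin d → ℂ)) h)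
  -- lower bound : c * ‖Y‖ ≤ ‖W‖
  have hlow : c * ‖Y‖ ≤ ‖W‖ := by
    have hWi : ∀ i, W i = (lamPert - lam i) * y i := by
      intro i
      have := congrFun hw i
      simp only [Pi.sub_apply, Pi.smul_apply, smul_eq_mul, mulVec_diagonal] at this
      rw [hW]
      simpa [sub_mul] using this.symm
    have hsq : (c * ‖Y‖) ^ 2 ≤ ‖W‖ ^ 2 := by
      have h1 : ‖Y‖ ^ 2 = ∑ i, ‖y i‖ ^ 2 := by
        rw [EuclideanSpace.norm_eq, Real.sq_sqrt (Finset.sum_nonneg fun i _ => sq_nonneg _)]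
        simp [hY, WithLp.equiv_symm_apply]
      have h2 : ‖W‖ ^ 2 = ∑ i, ‖(lamPert - lam i) * y i‖ ^ 2 := by
        rw [EuclideanSpace.norm_eq, Real.sq_sqrt (Finset.sum_nonneg fun i _ => sq_nonneg _)]
        exact Finset.sum_congr rfl fun i _ => by rw [hWi i]
      rw [h2, mul_pow, h1, Finset.mul_sum]
      refine Finset.sum_le_sum fun i _ => ?_
      rw [norm_mul, mul_pow]
      have := hk i (Finset.mem_univ i)
      have hcn : 0 ≤ c := by rw [hc]; exact norm_nonneg _
      exact mul_le_mul_of_nonneg_right (pow_le_pow_left₀ hcn this 2) (sq_nonneg _)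
    have h0 : 0 ≤ c * ‖Y‖ := mul_nonneg (by rw [hc]; exact norm_nonneg _) (norm_nonneg _)
    nlinarith [norm_nonneg W]
  -- upper bound : ‖W‖ ≤ ‖V⁻¹‖ ‖E‖ ‖V‖ ‖Y‖
  have hup : ‖W‖ ≤ l2OpNorm V⁻¹ * (l2OpNorm E * (l2OpNorm V * ‖Y‖)) := by
    have h3 : ‖(WithLp.equiv 2 (Fin d → ℂ)).symm (E *ᵥ x)‖ ≤ l2OpNorm E * ‖X‖ := by
      simpa [hX] using euclid_mulVec_le E x
    have h4 : ‖X‖ ≤ l2OpNorm V * ‖Y‖ := by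
      have := euclid_mulVec_le V y
      rw [hVy] at this
      simpa [hX, hY] using this
    have h1' : ‖W‖ ≤ l2OpNorm V⁻¹ * ‖(WithLp.equiv 2 (Fin d → ℂ)).symm (E *ᵥ x)‖ := by
      simpa [hW] using euclid_mulVec_le V⁻¹ (E *ᵥ x)
    calc ‖W‖ ≤ l2OpNorm V⁻¹ * ‖(WithLp.equiv 2 (Fin d → ℂ)).symm (E *ᵥ x)‖ := h1'
      _ ≤ l2OpNorm V⁻¹ * (l2OpNorm E * ‖X‖) :=
          mul_le_mul_of_nonneg_left h3 (norm_nonneg _)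
      _ ≤ l2OpNorm V⁻¹ * (l2OpNorm E * (l2OpNorm V * ‖Y‖)) :=
          mul_le_mul_of_nonneg_left
            (mul_le_mul_of_nonneg_left h4 (norm_nonneg _)) (norm_nonneg _)
  -- combine
  have hEnn : (0:ℝ) ≤ l2OpNorm E := norm_nonneg _
  have hVnn : (0:ℝ) ≤ l2OpNorm V := norm_nonneg _
  have hVinn : (0:ℝ) ≤ l2OpNorm V⁻¹ := norm_nonneg _
  have hδ : (0:ℝ) ≤ δ := hEnn.trans hE
  have : c * ‖Y‖ ≤ (l2OpNorm V * l2OpNorm V⁻¹) * δ * ‖Y‖ := by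
    refine hlow.trans (hup.trans ?_)
    have : l2OpNorm V⁻¹ * (l2OpNorm E * (l2OpNorm V * ‖Y‖)) ≤
        l2OpNorm V⁻¹ * (δ * (l2OpNorm V * ‖Y‖)) := by
      refine mul_le_mul_of_nonneg_left (mul_le_mul_of_nonneg_right hE ?_) hVinn
      positivity
    refine this.trans (le_of_eq ?_)
    ring
  exact le_of_mul_le_mul_right this hYpos
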